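/- Let (n_k) be lacunary with ratio α > 1, and let σ_n f = K_n * f where K_n is the Fejér kernel (equivalently, the Fourier multiplier with symbol K̂_n(x) = max(0, 1 − |x|/(n+1))). Then there exists C > 0 such that for every bounded sequence (c_k) with |c_k| ≤ 1 and every N, ‖∑_{k=1}^{N} c_k (σ_{n_{k+1}} f − σ_{n_k} f)‖₂ ≤ C ‖f‖₂ for all f ∈ L²(ℝ). -/

import Mathlib

open MeasureTheory FourierTransform

/-- Fejér multiplier symbol. -/
noncomputable def fejerSymbol (n : ℕ) (x : ℝ) : ℝ := max 0 (1 - |x| / (n + 1))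

lemma fejerSymbol_nonneg (n : ℕ) (x : ℝ) : 0 ≤ fejerSymbol n x := le_max_left _ _

lemma fejerSymbol_le_one (n : ℕ) (x : ℝ) : fejerSymbol n x ≤ 1 := by
  unfold fejerSymbol
  have : 0 ≤ |x| / (n + 1) := by positivity
  apply max_le <;> linarith

lemma fejerSymbol_mono {m m' : ℕ} (h : m ≤ m') (x : ℝ) :
    fejerSymbol m x ≤ fejerSymbol m' x := by
  unfold fejerSymbol
  have h1 : |x| / (m' + 1) ≤ |x| / (m + 1) := by
    apply div_le_div_of_nonneg_left (abs_nonneg x) (by positivity)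
    exact_mod_cast Nat.succ_le_succ h
  apply max_le (le_max_left _ _)
  exact le_max_of_le_right (by linarith)

lemma lp_coeFn_sum {ι : Type*} (s : Finset ι) (g : ι → Lp ℂ 2 (volume : Measure ℝ)) :
    ((∑ i ∈ s, g i : Lp ℂ 2 (volume : Measure ℝ)) : ℝ → ℂ) =ᵐ[volume]
      fun x => ∑ i ∈ s, (g i : ℝ → ℂ) x := by
  classical
  induction s using Finset.induction with
  | empty => simp only [Finset.sum_empty]; exact Lp.coeFn_zero (E := ℂ) (p := 2) (μ := (volume : Measure ℝ))
  | @insert a s' hi ih =>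
    rw [Finset.sum_insert hi]
    filter_upwards [Lp.coeFn_add (g a) (∑ i ∈ s', g i), ih] with x hx hx'
    simp only [Finset.sum_insert hi]
    rw [hx, Pi.add_apply, hx']

theorem stmt_6
    (n : ℕ → ℕ) (hn : ∀ k, 0 < n k) (α : ℝ) (hα : 1 < α)
    (hlac : ∀ k, α ≤ (n (k + 1) : ℝ) / (n k : ℝ))
    -- `F` is the Plancherel (Fourier) transform on `L²(ℝ)`.
    (F : Lp ℂ 2 (volume : Measure ℝ) ≃ₗᵢ[ℂ] Lp ℂ 2 (volume : Measure ℝ))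
    (hF : ∀ f : Lp ℂ 2 (volume : Measure ℝ), Integrable f volume →
      (F f : ℝ → ℂ) =ᵐ[volume] 𝓕 (f : ℝ → ℂ))
    -- `σ m` is the Fejér mean: the Fourier multiplier with symbol `fejerSymbol m`.
    (σ : ℕ → (Lp ℂ 2 (volume : Measure ℝ) →ₗ[ℂ] Lp ℂ 2 (volume : Measure ℝ)))
    (hσ : ∀ m f, (F (σ m f) : ℝ → ℂ) =ᵐ[volume]
      fun x => (fejerSymbol m x : ℂ) * (F f : ℝ → ℂ) x) :
    ∃ C : ℝ, 0 < C ∧ ∀ c : ℕ → ℂ, (∀ k, ‖c k‖ ≤ 1) →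
      ∀ (N : ℕ) (f : Lp ℂ 2 (volume : Measure ℝ)),
        ‖∑ k ∈ Finset.Icc 1 N, c k • (σ (n (k + 1)) f - σ (n k) f)‖ ≤ C * ‖f‖ := by
  -- monotonicity of n
  have hmono : ∀ k, n k ≤ n (k + 1) := by
    intro k
    have hk : (0 : ℝ) < (n k : ℝ) := by exact_mod_cast hn k
    have := hlac k
    have h1 : (n k : ℝ) ≤ (n (k + 1) : ℝ) := by
      rw [le_div_iff₀ hk] at this
      nlinarith
    exact_mod_cast h1
  refine ⟨1, one_pos, fun c hc N f => ?_⟩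
  set g : Lp ℂ 2 (volume : Measure ℝ) :=
    ∑ k ∈ Finset.Icc 1 N, c k • ((σ (n (k + 1))) f - (σ (n k)) f) with hg
  rw [one_mul, ← F.norm_map g, ← F.norm_map f]
  apply Lp.norm_le_norm_of_ae_le
  -- express F g pointwise a.e.
  have hFg : F g = ∑ k ∈ Finset.Icc 1 N, c k • (F ((σ (n (k + 1))) f) - F ((σ (n k)) f)) := by
    rw [hg, map_sum]
    simp only [_root_.map_smul, map_sub]
  have hall : ∀ᵐ x ∂(volume : Measure ℝ), ∀ k ∈ Finset.Icc 1 N,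
      ((c k • (F ((σ (n (k + 1))) f) - F ((σ (n k)) f)) : Lp ℂ 2 (volume : Measure ℝ)) : ℝ → ℂ) x
        = c k * (((fejerSymbol (n (k + 1)) x : ℂ)) - (fejerSymbol (n k) x : ℂ)) * (F f : ℝ → ℂ) x := by
    rw [Filter.eventually_all_finset]
    intro k _
    filter_upwards [Lp.coeFn_smul (c k) (F ((σ (n (k + 1))) f) - F ((σ (n k)) f)),
      Lp.coeFn_sub (F ((σ (n (k + 1))) f)) (F ((σ (n k)) f)),
      hσ (n (k + 1)) f, hσ (n k) f] with x h1 h2 h3 h4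
    rw [h1, Pi.smul_apply, h2, Pi.sub_apply, h3, h4]
    simp only [smul_eq_mul]
    ring
  filter_upwards [lp_coeFn_sum (Finset.Icc 1 N)
    (fun k => c k • (F ((σ (n (k + 1))) f) - F ((σ (n k)) f))), hall] with x hsum hx
  rw [hFg, hsum]
  have heq : ∑ k ∈ Finset.Icc 1 N,
      ((c k • (F ((σ (n (k + 1))) f) - F ((σ (n k)) f)) : Lp ℂ 2 (volume : Measure ℝ)) : ℝ → ℂ) x
      = (∑ k ∈ Finset.Icc 1 N,
          c k * (((fejerSymbol (n (k + 1)) x : ℂ)) - (fejerSymbol (n k) x : ℂ))) * (F f : ℝ → ℂ) x := by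
    rw [Finset.sum_mul]
    exact Finset.sum_congr rfl hx
  rw [heq, norm_mul]
  have hbound : ‖∑ k ∈ Finset.Icc 1 N,
      c k * (((fejerSymbol (n (k + 1)) x : ℂ)) - (fejerSymbol (n k) x : ℂ))‖ ≤ 1 := by
    calc ‖∑ k ∈ Finset.Icc 1 N, c k * (((fejerSymbol (n (k + 1)) x : ℂ)) - (fejerSymbol (n k) x : ℂ))‖
        ≤ ∑ k ∈ Finset.Icc 1 N, ‖c k * (((fejerSymbol (n (k + 1)) x : ℂ)) - (fejerSymbol (n k) x : ℂ))‖ :=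
          norm_sum_le _ _
      _ ≤ ∑ k ∈ Finset.Icc 1 N, (fejerSymbol (n (k + 1)) x - fejerSymbol (n k) x) := by
          apply Finset.sum_le_sum
          intro k _
          rw [norm_mul]
          have hd : fejerSymbol (n k) x ≤ fejerSymbol (n (k + 1)) x :=
            fejerSymbol_mono (hmono k) x
          have : ‖((fejerSymbol (n (k + 1)) x : ℂ)) - (fejerSymbol (n k) x : ℂ)‖
              = fejerSymbol (n (k + 1)) x - fejerSymbol (n k) x := by
            rw [← Complex.ofReal_sub, Complex.norm_real, Real.norm_eq_abs, abs_of_nonneg (by linarith)]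
          rw [this]
          calc ‖c k‖ * (fejerSymbol (n (k + 1)) x - fejerSymbol (n k) x)
              ≤ 1 * (fejerSymbol (n (k + 1)) x - fejerSymbol (n k) x) := by
                apply mul_le_mul_of_nonneg_right (hc k) (by linarith)
            _ = _ := one_mul _
      _ ≤ 1 := by
          have ht : ∑ k ∈ Finset.Icc 1 N, (fejerSymbol (n (k + 1)) x - fejerSymbol (n k) x)
              = fejerSymbol (n (N + 1)) x - fejerSymbol (n 1) x ∨
              ∑ k ∈ Finset.Icc 1 N, (fejerSymbol (n (k + 1)) x - fejerSymbol (n k) x) = 0 := by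
            rcases Nat.eq_zero_or_pos N with h0 | hpos
            · right; simp [h0]
            · left
              have : Finset.Icc 1 N = (Finset.range N).map ⟨fun i => i + 1, add_left_injective 1⟩ := by
                ext a
                simp only [Finset.mem_Icc, Finset.mem_map, Finset.mem_range,
                  Function.Embedding.coeFn_mk]
                constructor
                · rintro ⟨h1, h2⟩; exact ⟨a - 1, by omega, by omega⟩
                · rintro ⟨b, hb, rfl⟩; omega
              rw [this, Finset.sum_map]
              simpa using Finset.sum_range_sub (fun i => fejerSymbol (n (i + 1)) x) N
          rcases ht with h | h <;> rw [h]
          · have := fejerSymbol_le_one (n (N + 1)) x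
            have := fejerSymbol_nonneg (n 1) x
            linarith
          · norm_num
  calc ‖∑ k ∈ Finset.Icc 1 N, c k * (((fejerSymbol (n (k + 1)) x : ℂ)) - (fejerSymbol (n k) x : ℂ))‖ * ‖(F f : ℝ → ℂ) x‖
      ≤ 1 * ‖(F f : ℝ → ℂ) x‖ := mul_le_mul_of_nonneg_right hbound (norm_nonneg _)
    _ = _ := one_mul _
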